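/- For every d ∈ T⁺, the double coset J·d·J is contained in N_O·d·J; that is, every element of J·d·J can be written as u·d·j with u upper unitriangular with entries in ℤ_p and j ∈ J. -/

import Mathlib

open Matrix MeasureTheory Pointwise

variable (p n : ℕ) [Fact p.Prime]

/-- The `(i,j)` entry of an element of `GL n ℚ_[p]`. -/
def entry (g : GL (Fin n) ℚ_[p]) (i j : Fin n) : ℚ_[p] :=
  (g : Matrix (Fin n) (Fin n) ℚ_[p]) i j

/-- The Iwahori subgroup `J`, as a subset of `GL n ℚ_[p]`: matrices of `GL_n(ℤ_p)`
(integral matrix with integral inverse) whose entries strictly below the diagonal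
lie in `pℤ_p` (i.e. have norm `< 1`). -/
def Jset : Set (GL (Fin n) ℚ_[p]) :=
  {g | (∀ i j, ‖entry p n g i j‖ ≤ 1) ∧ (∀ i j, ‖entry p n g⁻¹ i j‖ ≤ 1) ∧
       ∀ i j : Fin n, j < i → ‖entry p n g i j‖ < 1}

/-- The diagonal torus `T`. -/
def Tset : Set (GL (Fin n) ℚ_[p]) :=
  {g | ∀ i j : Fin n, i ≠ j → entry p n g i j = 0}

/-- The group `N` of upper unitriangular matrices. -/
def Nset : Set (GL (Fin n) ℚ_[p]) :=
  {g | (∀ i : Fin n, entry p n g i i = 1) ∧ ∀ i j : Fin n, j < i → entry p n g i j = 0}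

/-- The upper triangular Borel subgroup `B`. -/
def Bset : Set (GL (Fin n) ℚ_[p]) :=
  {g | ∀ i j : Fin n, j < i → entry p n g i j = 0}

/-- Permutation matrix `w_σ` of `σ` as an element of `GL n ℚ_[p]`, in the convention
`w_σ · e_j = e_{σ(j)}` (entries `(w_σ)_{ij} = δ_{i, σ(j)}`). -/
noncomputable def permGL (σ : Equiv.Perm (Fin n)) : GL (Fin n) ℚ_[p] :=
  Matrix.GeneralLinearGroup.mkOfDetNeZero ((σ.permMatrix ℚ_[p])ᵀ) (by
    rw [Matrix.det_transpose, Matrix.det_permutation]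
    exact_mod_cast Int.cast_ne_zero.mpr (Equiv.Perm.sign σ).ne_zero)

/-- The elementary matrix `I + t·E_{ij}` as an element of `GL n ℚ_[p]`. -/
noncomputable def elemGL (i j : Fin n) (hij : i ≠ j) (t : ℚ_[p]) : GL (Fin n) ℚ_[p] :=
  Matrix.GeneralLinearGroup.mkOfDetNeZero (Matrix.transvection i j t) (by
    rw [Matrix.det_transvection_of_ne i j hij]
    exact one_ne_zero)

/-- The set of inversions `Inv(σ) = {(i,j) : i < j, σ⁻¹ i > σ⁻¹ j}`. -/
def InvSet (σ : Equiv.Perm (Fin n)) : Finset (Fin n × Fin n) :=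
  Finset.univ.filter fun ij => ij.1 < ij.2 ∧ σ⁻¹ ij.2 < σ⁻¹ ij.1

/-- The length `ℓ(σ)` (number of inversions) of `σ`. -/
def len (σ : Equiv.Perm (Fin n)) : ℕ := (InvSet n σ).card

/-- `i+1` as an element of `Fin n`. -/
def finSucc (i : Fin n) (h : (i : ℕ) + 1 < n) : Fin n := ⟨(i : ℕ) + 1, h⟩

theorem finSucc_ne (i : Fin n) (h : (i : ℕ) + 1 < n) : i ≠ finSucc n i h := by
  simp [finSucc, Fin.ext_iff]

/-- The value of `χδ_B` at `b`, defined through the diagonal entries of `b`: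
`(χδ_B)(b) = ∏_{i=1}^n z_i^{v(b_i)} p^{-(n+1-2i) v(b_i)}`. -/
noncomputable def chiDelta (z : Fin n → ℂˣ) (d : GL (Fin n) ℚ_[p]) : ℂ :=
  ∏ i : Fin n, ((z i : ℂ) ^ (entry p n d i i).valuation *
    (p : ℂ) ^ (-(((n : ℤ) + 1) - 2 * ((i : ℕ) + 1 : ℤ)) * (entry p n d i i).valuation))

/-- The character `ψ(u) = ∏_{i=1}^{n-1} ψ₀(u_{i,i+1})` of `N`, built from an additive
character `ψ₀` of `ℚ_p`. -/
noncomputable def psiN (ψ₀ : ℚ_[p] → ℂ) (u : GL (Fin n) ℚ_[p]) : ℂ :=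
  ∏ i : Fin n, if h : (i : ℕ) + 1 < n then ψ₀ (entry p n u i (finSucc n i h)) else 1

/-- `λ(d)` is `σ`-dominant: for all adjacent indices,
`v(d_i) - v(d_{i+1}) ≥ 0` if `σ⁻¹ i < σ⁻¹(i+1)`, and `≥ -1` if `σ⁻¹ i > σ⁻¹(i+1)`. -/
def IsDom (σ : Equiv.Perm (Fin n)) (d : GL (Fin n) ℚ_[p]) : Prop :=
  ∀ (i : Fin n) (h : (i : ℕ) + 1 < n),
    (σ⁻¹ i < σ⁻¹ (finSucc n i h) →
      0 ≤ (entry p n d i i).valuation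
            - (entry p n d (finSucc n i h) (finSucc n i h)).valuation) ∧
    (σ⁻¹ (finSucc n i h) < σ⁻¹ i →
      -1 ≤ (entry p n d i i).valuation
            - (entry p n d (finSucc n i h) (finSucc n i h)).valuation)

/-- The dominant part `T⁺` of the diagonal torus: `v(d_1) ≥ … ≥ v(d_n)`. -/
def Tplus : Set (GL (Fin n) ℚ_[p]) :=
  {d | d ∈ Tset p n ∧ Antitone fun i : Fin n => (entry p n d i i).valuation}

/-- The double coset `J g J`. -/
def dcos (g : GL (Fin n) ℚ_[p]) : Set (GL (Fin n) ℚ_[p]) :=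
  {x | ∃ a ∈ Jset p n, ∃ b ∈ Jset p n, x = a * g * b}

section IwahoriHelpers
variable {p : ℕ} [Fact p.Prime]


lemma norm_add_eq_left {x y : ℚ_[p]} (h : ‖y‖ < ‖x‖) : ‖x + y‖ = ‖x‖ := by
  rw [Padic.add_eq_max_of_ne h.ne', max_eq_left h.le]

lemma norm_sub_le_max (x y : ℚ_[p]) : ‖x - y‖ ≤ max ‖x‖ ‖y‖ := by
  rw [sub_eq_add_neg]
  simpa using Padic.nonarchimedean x (-y)

lemma norm_sum_le_one {ι : Type*} (s : Finset ι) (f : ι → ℚ_[p])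
    (h : ∀ i ∈ s, ‖f i‖ ≤ 1) : ‖∑ i ∈ s, f i‖ ≤ 1 := by
  classical
  induction s using Finset.induction_on with
  | empty => simp
  | @insert a s ha ih =>
    rw [Finset.sum_insert ha]
    exact le_trans (Padic.nonarchimedean _ _)
      (max_le (h _ (Finset.mem_insert_self _ _)) (ih fun i hi => h i (Finset.mem_insert_of_mem hi)))

lemma norm_sum_lt_one {ι : Type*} (s : Finset ι) (f : ι → ℚ_[p])
    (h : ∀ i ∈ s, ‖f i‖ < 1) : ‖∑ i ∈ s, f i‖ < 1 := by
  classical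
  induction s using Finset.induction_on with
  | empty => simp
  | @insert a s ha ih =>
    rw [Finset.sum_insert ha]
    exact lt_of_le_of_lt (Padic.nonarchimedean _ _)
      (max_lt (h _ (Finset.mem_insert_self _ _)) (ih fun i hi => h i (Finset.mem_insert_of_mem hi)))

lemma UL : ∀ (m : ℕ) (A Ainv : Matrix (Fin m) (Fin m) ℚ_[p]),
    A * Ainv = 1 →
    (∀ i j, ‖A i j‖ ≤ 1) → (∀ i j, ‖Ainv i j‖ ≤ 1) →
    (∀ i j, j < i → ‖A i j‖ < 1) →
    ∃ U L : Matrix (Fin m) (Fin m) ℚ_[p],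
      A = U * L ∧ (∀ i, U i i = 1) ∧ (∀ i j, j < i → U i j = 0) ∧
      (∀ i j, ‖U i j‖ ≤ 1) ∧
      (∀ i j, i < j → L i j = 0) ∧ (∀ i j, ‖L i j‖ ≤ 1) ∧
      (∀ i j, j < i → ‖L i j‖ < 1) := by
  intro m
  induction m with
  | zero =>
    intro A Ainv _ _ _ _
    exact ⟨1, 1, by ext i j; exact i.elim0, fun i => i.elim0, fun i => i.elim0,
      fun i => i.elim0, fun i => i.elim0, fun i => i.elim0, fun i => i.elim0⟩
  | succ m IH =>
    intro A Ainv hA1 h1 hinv h2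
    set l : Fin (m + 1) := Fin.last m with hldef
    have hcs_lt : ∀ k : Fin m, (k.castSucc : Fin (m+1)) < l := fun k => Fin.castSucc_lt_last k
    -- the corner entry is a unit
    have hsum : (∑ k : Fin m, A l k.castSucc * Ainv k.castSucc l) + A l l * Ainv l l = 1 := by
      have h := congrFun (congrFun hA1 l) l
      rwa [Matrix.mul_apply, Fin.sum_univ_castSucc, Matrix.one_apply_eq] at h
    have hsmall : ‖∑ k : Fin m, A l k.castSucc * Ainv k.castSucc l‖ < 1 := by
      refine norm_sum_lt_one _ _ fun k _ => ?_
      calc ‖A l k.castSucc * Ainv k.castSucc l‖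
          = ‖A l k.castSucc‖ * ‖Ainv k.castSucc l‖ := norm_mul _ _
        _ ≤ ‖A l k.castSucc‖ * 1 := by
            exact mul_le_mul_of_nonneg_left (hinv _ _) (norm_nonneg _)
        _ < 1 := by rw [mul_one]; exact h2 _ _ (hcs_lt k)
    have hALL : ‖A l l * Ainv l l‖ = 1 := by
      have h' : A l l * Ainv l l
          = 1 + -(∑ k : Fin m, A l k.castSucc * Ainv k.castSucc l) := by
        rw [← hsum]; ring
      rw [h', norm_add_eq_left (by rw [norm_neg, norm_one]; exact hsmall), norm_one]
    have heA : ‖A l l‖ = 1 := by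
      have h1le : (1:ℝ) ≤ ‖A l l‖ := by
        calc (1:ℝ) = ‖A l l‖ * ‖Ainv l l‖ := by rw [← norm_mul, hALL]
          _ ≤ ‖A l l‖ * 1 := mul_le_mul_of_nonneg_left (hinv _ _) (norm_nonneg _)
          _ = ‖A l l‖ := mul_one _
      exact le_antisymm (h1 l l) h1le
    have he0 : A l l ≠ 0 := by
      intro h
      rw [h, norm_zero] at heA
      norm_num at heA
    have heinv : ‖(A l l)⁻¹‖ = 1 := by rw [norm_inv, heA]; norm_num
    -- Schur-type block
    set B : Matrix (Fin m) (Fin m) ℚ_[p] :=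
      Matrix.of (fun i j => A i.castSucc j.castSucc
        - A i.castSucc l * (A l l)⁻¹ * A l j.castSucc) with hBdef
    set Binv : Matrix (Fin m) (Fin m) ℚ_[p] :=
      Matrix.of (fun i j => Ainv i.castSucc j.castSucc) with hBinvdef
    have hrow : ∀ (a : Fin (m+1)) (j : Fin m),
        ∑ k : Fin m, A a k.castSucc * Ainv k.castSucc j.castSucc
          = (1 : Matrix (Fin (m+1)) (Fin (m+1)) ℚ_[p]) a j.castSucc
              - A a l * Ainv l j.castSucc := by
      intro a j
      have h := congrFun (congrFun hA1 a) j.castSucc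
      rw [Matrix.mul_apply, Fin.sum_univ_castSucc] at h
      exact eq_sub_of_add_eq h
    have hBmul : B * Binv = 1 := by
      ext i j
      rw [Matrix.mul_apply]
      have expand : ∀ k : Fin m, B i k * Binv k j =
          A i.castSucc k.castSucc * Ainv k.castSucc j.castSucc
            - A i.castSucc l * (A l l)⁻¹
                * (A l k.castSucc * Ainv k.castSucc j.castSucc) := by
        intro k
        simp only [hBdef, hBinvdef, Matrix.of_apply]
        ring
      rw [Finset.sum_congr rfl fun k _ => expand k, Finset.sum_sub_distrib,
        ← Finset.mul_sum, hrow, hrow]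
      have h1ne : (1 : Matrix (Fin (m+1)) (Fin (m+1)) ℚ_[p]) l j.castSucc = 0 :=
        Matrix.one_apply_ne (hcs_lt j).ne'
      have h1eq : (1 : Matrix (Fin (m+1)) (Fin (m+1)) ℚ_[p]) i.castSucc j.castSucc
          = (1 : Matrix (Fin m) (Fin m) ℚ_[p]) i j := by
        by_cases h : i = j
        · subst h; rw [Matrix.one_apply_eq, Matrix.one_apply_eq]
        · rw [Matrix.one_apply_ne (fun hc => h (Fin.castSucc_injective _ hc)),
            Matrix.one_apply_ne h]
      rw [h1ne, h1eq]
      field_simp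
      ring
    have hB1 : ∀ i j, ‖B i j‖ ≤ 1 := by
      intro i j
      refine le_trans (norm_sub_le_max _ _) (max_le (h1 _ _) ?_)
      calc ‖A i.castSucc l * (A l l)⁻¹ * A l j.castSucc‖
          = ‖A i.castSucc l‖ * ‖(A l l)⁻¹‖ * ‖A l j.castSucc‖ := by
            rw [norm_mul, norm_mul]
        _ ≤ 1 * 1 * 1 := by
            refine mul_le_mul (mul_le_mul (h1 _ _) (le_of_eq heinv) (norm_nonneg _) ?_)
              (h1 _ _) (norm_nonneg _) ?_ <;> norm_num
        _ = 1 := by norm_num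
    have hcorr_lt : ∀ (i j : Fin m), ‖A i.castSucc l * (A l l)⁻¹ * A l j.castSucc‖ < 1 := by
      intro i j
      calc ‖A i.castSucc l * (A l l)⁻¹ * A l j.castSucc‖
          = ‖A i.castSucc l‖ * ‖(A l l)⁻¹‖ * ‖A l j.castSucc‖ := by
            rw [norm_mul, norm_mul]
        _ ≤ 1 * 1 * ‖A l j.castSucc‖ := by
            refine mul_le_mul_of_nonneg_right
              (mul_le_mul (h1 _ _) (le_of_eq heinv) (norm_nonneg _) (by norm_num))
              (norm_nonneg _)
        _ < 1 := by rw [one_mul, one_mul]; exact h2 _ _ (hcs_lt j)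
    have hB2 : ∀ i j, j < i → ‖B i j‖ < 1 := by
      intro i j hij
      refine lt_of_le_of_lt (norm_sub_le_max _ _)
        (max_lt (h2 _ _ (Fin.castSucc_lt_castSucc_iff.mpr hij)) (hcorr_lt _ _))
    obtain ⟨U', L', hBUL, hU'diag, hU'low, hU'norm, hL'up, hL'norm, hL'sub⟩ :=
      IH B Binv hBmul hB1 (fun i j => hinv _ _) hB2
    classical
    set U : Matrix (Fin (m+1)) (Fin (m+1)) ℚ_[p] := Matrix.of (fun i j =>
      if hi : (i:ℕ) < m then
        (if hj : (j:ℕ) < m then U' ⟨i,hi⟩ ⟨j,hj⟩ else A i l * (A l l)⁻¹)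
      else (if (j:ℕ) < m then 0 else 1)) with hUdef
    set L : Matrix (Fin (m+1)) (Fin (m+1)) ℚ_[p] := Matrix.of (fun i j =>
      if hi : (i:ℕ) < m then
        (if hj : (j:ℕ) < m then L' ⟨i,hi⟩ ⟨j,hj⟩ else 0)
      else A l j) with hLdef
    have hlm : ¬ ((l:ℕ) < m) := by simp [hldef]
    have hUcc : ∀ (i k : Fin m), U i.castSucc k.castSucc = U' i k := by
      intro i k
      simp only [hUdef, Matrix.of_apply]
      rw [dif_pos (by simpa using i.isLt), dif_pos (by simpa using k.isLt)]
      rfl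
    have hUcl : ∀ (i : Fin m), U i.castSucc l = A i.castSucc l * (A l l)⁻¹ := by
      intro i
      simp only [hUdef, Matrix.of_apply]
      rw [dif_pos (by simpa using i.isLt), dif_neg hlm]
    have hUlc : ∀ (k : Fin m), U l k.castSucc = 0 := by
      intro k
      simp only [hUdef, Matrix.of_apply]
      rw [dif_neg hlm, if_pos (by simpa using k.isLt)]
    have hUll : U l l = 1 := by
      simp only [hUdef, Matrix.of_apply]
      rw [dif_neg hlm, if_neg hlm]
    have hLcc : ∀ (i k : Fin m), L i.castSucc k.castSucc = L' i k := by
      intro i k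
      simp only [hLdef, Matrix.of_apply]
      rw [dif_pos (by simpa using i.isLt), dif_pos (by simpa using k.isLt)]
      rfl
    have hLcl : ∀ (i : Fin m), L i.castSucc l = 0 := by
      intro i
      simp only [hLdef, Matrix.of_apply]
      rw [dif_pos (by simpa using i.isLt), dif_neg hlm]
    have hLl : ∀ (j : Fin (m+1)), L l j = A l j := by
      intro j
      simp only [hLdef, Matrix.of_apply]
      rw [dif_neg hlm]
    refine ⟨U, L, ?_, ?_, ?_, ?_, ?_, ?_, ?_⟩
    · -- A = U * L
      ext i j
      rw [Matrix.mul_apply, Fin.sum_univ_castSucc]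
      induction i using Fin.lastCases with
      | last =>
        induction j using Fin.lastCases with
        | last => simp [hUlc, hUll, hLl, ← hldef]
        | cast j => simp [hUlc, hUll, hLl, ← hldef]
      | cast i =>
        induction j using Fin.lastCases with
        | last =>
          simp only [← hldef, hUcc, hUcl, hLcl, hLl, mul_zero, Finset.sum_const_zero, zero_add]
          field_simp
        | cast j =>
          have hsum' : ∑ k : Fin m, U i.castSucc k.castSucc * L k.castSucc j.castSucc
              = B i j := by
            rw [Finset.sum_congr rfl (fun k _ => by rw [hUcc, hLcc])]
            rw [hBUL, Matrix.mul_apply]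
          rw [hsum', hUcl, hLl, hBdef]
          simp only [Matrix.of_apply]
          field_simp
          ring
    · -- diagonal of U
      intro i
      induction i using Fin.lastCases with
      | last => exact hUll
      | cast i => rw [hUcc]; exact hU'diag i
    · -- U strictly lower entries vanish
      intro i j hij
      induction i using Fin.lastCases with
      | last =>
        induction j using Fin.lastCases with
        | last => exact absurd hij (lt_irrefl _)
        | cast j => exact hUlc j
      | cast i =>
        induction j using Fin.lastCases with
        | last => exact absurd hij (not_lt.mpr (Fin.le_last _))
        | cast j =>
          rw [hUcc]
          exact hU'low i j (Fin.castSucc_lt_castSucc_iff.mp hij)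
    · -- U entries integral
      intro i j
      induction i using Fin.lastCases with
      | last =>
        induction j using Fin.lastCases with
        | last => rw [hUll]; simp
        | cast j => rw [hUlc]; simp
      | cast i =>
        induction j using Fin.lastCases with
        | last =>
          rw [hUcl, norm_mul]
          calc ‖A i.castSucc l‖ * ‖(A l l)⁻¹‖ ≤ 1 * 1 := by
                exact mul_le_mul (h1 _ _) (le_of_eq heinv) (norm_nonneg _) (by norm_num)
            _ = 1 := by norm_num
        | cast j => rw [hUcc]; exact hU'norm i j
    · -- L strictly upper entries vanish
      intro i j hij
      induction i using Fin.lastCases with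
      | last => exact absurd hij (not_lt.mpr (Fin.le_last _))
      | cast i =>
        induction j using Fin.lastCases with
        | last => exact hLcl i
        | cast j =>
          rw [hLcc]
          exact hL'up i j (Fin.castSucc_lt_castSucc_iff.mp hij)
    · -- L entries integral
      intro i j
      induction i using Fin.lastCases with
      | last => rw [hLl]; exact h1 _ _
      | cast i =>
        induction j using Fin.lastCases with
        | last => rw [hLcl]; simp
        | cast j => rw [hLcc]; exact hL'norm i j
    · -- L strictly lower entries small
      intro i j hij
      induction i using Fin.lastCases with
      | last =>
        induction j using Fin.lastCases with
        | last => exact absurd hij (lt_irrefl _)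
        | cast j => rw [hLl]; exact h2 _ _ (hcs_lt j)
      | cast i =>
        induction j using Fin.lastCases with
        | last => exact absurd hij (not_lt.mpr (Fin.le_last _))
        | cast j =>
          rw [hLcc]
          exact hL'sub i j (Fin.castSucc_lt_castSucc_iff.mp hij)

lemma mul_norm_le_one' {x y : ℝ} (hx : x ≤ 1) (hy : y ≤ 1) (hx0 : 0 ≤ x) : x * y ≤ 1 := by
  nlinarith

lemma mul_norm_lt_one' {x y : ℝ} (hx : x < 1) (hy : y ≤ 1) (hx0 : 0 ≤ x) (hy0 : 0 ≤ y) :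
    x * y < 1 := by
  nlinarith

end IwahoriHelpers


theorem Jset_mul {g h : GL (Fin n) ℚ_[p]} (hg : g ∈ Jset p n) (hh : h ∈ Jset p n) :
    g * h ∈ Jset p n := by
  obtain ⟨hg1, hg2, hg3⟩ := hg
  obtain ⟨hh1, hh2, hh3⟩ := hh
  refine ⟨?_, ?_, ?_⟩
  · intro i j
    show ‖((g * h : GL (Fin n) ℚ_[p]) : Matrix (Fin n) (Fin n) ℚ_[p]) i j‖ ≤ 1
    rw [Units.val_mul, Matrix.mul_apply]
    refine norm_sum_le_one _ _ fun k _ => ?_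
    rw [norm_mul]
    exact mul_norm_le_one' (hg1 i k) (hh1 k j) (norm_nonneg _)
  · intro i j
    show ‖(((g * h)⁻¹ : GL (Fin n) ℚ_[p]) : Matrix (Fin n) (Fin n) ℚ_[p]) i j‖ ≤ 1
    rw [_root_.mul_inv_rev, Units.val_mul, Matrix.mul_apply]
    refine norm_sum_le_one _ _ fun k _ => ?_
    rw [norm_mul]
    exact mul_norm_le_one' (hh2 i k) (hg2 k j) (norm_nonneg _)
  · intro i j hij
    show ‖((g * h : GL (Fin n) ℚ_[p]) : Matrix (Fin n) (Fin n) ℚ_[p]) i j‖ < 1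
    rw [Units.val_mul, Matrix.mul_apply]
    refine norm_sum_lt_one _ _ fun k _ => ?_
    rw [norm_mul]
    rcases lt_or_ge k i with hk | hk
    · exact mul_norm_lt_one' (hg3 i k hk) (hh1 k j) (norm_nonneg _) (norm_nonneg _)
    · rw [mul_comm]
      exact mul_norm_lt_one' (hh3 k j (lt_of_lt_of_le hij hk)) (hg1 i k)
        (norm_nonneg _) (norm_nonneg _)

/-- For every dominant diagonal `d ∈ T⁺`, the double coset `J·d·J` is contained in
`N_O·d·J`: every element of `J·d·J` is `u·d·j` with `u` upper unitriangular with entries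
in `ℤ_p`, and `j ∈ J`. -/
theorem double_coset_dominant_subset (hn : 2 ≤ n) (d : GL (Fin n) ℚ_[p])
    (hd : d ∈ Tplus p n) (x : GL (Fin n) ℚ_[p]) (hx : x ∈ dcos p n d) :
    ∃ u : GL (Fin n) ℚ_[p], u ∈ Nset p n ∧ (∀ i j : Fin n, ‖entry p n u i j‖ ≤ 1) ∧
      ∃ j ∈ Jset p n, x = u * d * j := by
  obtain ⟨a, ha, b, hb, hxab⟩ := hx
  obtain ⟨hd_diag, hd_mono⟩ := hd
  set v : Fin n → ℚ_[p] := fun i => entry p n d i i with hv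
  have hdmat : (d : Matrix (Fin n) (Fin n) ℚ_[p]) = Matrix.diagonal v := by
    ext i j
    by_cases h : i = j
    · subst h; rw [Matrix.diagonal_apply_eq]; rfl
    · rw [Matrix.diagonal_apply_ne _ h]; exact hd_diag i j h
  have hdd : (d : Matrix (Fin n) (Fin n) ℚ_[p])
      * ((d⁻¹ : GL (Fin n) ℚ_[p]) : Matrix (Fin n) (Fin n) ℚ_[p]) = 1 := by
    rw [← Units.val_mul, mul_inv_cancel, Units.val_one]
  have hv0 : ∀ i, v i ≠ 0 := by
    intro i h0
    have hdet := congrArg Matrix.det hdd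
    rw [Matrix.det_mul, Matrix.det_one, hdmat, Matrix.det_diagonal,
      Finset.prod_eq_zero (Finset.mem_univ i) h0, zero_mul] at hdet
    exact zero_ne_one hdet
  set w : Fin n → ℚ_[p] := fun i => (v i)⁻¹ with hw
  have hdinvmat : ((d⁻¹ : GL (Fin n) ℚ_[p]) : Matrix (Fin n) (Fin n) ℚ_[p])
      = Matrix.diagonal w := by
    have hmul : (Matrix.diagonal v) * (Matrix.diagonal w)
        = (1 : Matrix (Fin n) (Fin n) ℚ_[p]) := by
      rw [Matrix.diagonal_mul_diagonal,
        show (fun i => v i * w i) = fun _ => (1:ℚ_[p]) from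
          funext fun i => mul_inv_cancel₀ (hv0 i), Matrix.diagonal_one]
    calc ((d⁻¹ : GL (Fin n) ℚ_[p]) : Matrix (Fin n) (Fin n) ℚ_[p])
        = (d : Matrix (Fin n) (Fin n) ℚ_[p])⁻¹ := Matrix.coe_units_inv d
      _ = Matrix.diagonal w := by rw [hdmat]; exact Matrix.inv_eq_right_inv hmul
  have hp1 : (1:ℝ) ≤ (p:ℝ) := by
    exact_mod_cast Nat.one_le_iff_ne_zero.mpr (Fact.out (p := p.Prime)).ne_zero
  have hkey : ∀ i j : Fin n, j ≤ i → ‖w i * v j‖ ≤ 1 := by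
    intro i j hji
    rcases eq_or_lt_of_le hji with h | h
    · rw [show w i = (v i)⁻¹ from rfl, ← h, inv_mul_cancel₀ (hv0 j), norm_one]
    · have hmono := hd_mono hji
      rw [show w i = (v i)⁻¹ from rfl, norm_mul, norm_inv,
        Padic.norm_eq_zpow_neg_valuation (hv0 i), Padic.norm_eq_zpow_neg_valuation (hv0 j),
        ← _root_.zpow_neg, neg_neg, ← zpow_add₀ (by positivity : (p:ℝ) ≠ 0)]
      refine zpow_le_one_of_nonpos₀ hp1 ?_
      have : (v i).valuation ≤ (v j).valuation := hmono
      linarith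
  -- UL decomposition of a
  obtain ⟨U, L, hAUL, hUdiag, hUlow, hUnorm, hLup, hLnorm, hLsub⟩ :=
    UL n (a : Matrix (Fin n) (Fin n) ℚ_[p]) ((a⁻¹ : GL (Fin n) ℚ_[p]) : Matrix (Fin n) (Fin n) ℚ_[p])
      (by rw [← Units.val_mul, mul_inv_cancel, Units.val_one]) ha.1 ha.2.1 ha.2.2
  have hUdet : U.det ≠ 0 := by
    rw [Matrix.det_of_upperTriangular (fun i j hij => hUlow i j hij)]
    simp [hUdiag]
  set uGL : GL (Fin n) ℚ_[p] := Matrix.GeneralLinearGroup.mkOfDetNeZero U hUdet with huGL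
  have huMat : (uGL : Matrix (Fin n) (Fin n) ℚ_[p]) = U := rfl
  set ℓ : GL (Fin n) ℚ_[p] := uGL⁻¹ * a with hℓ
  have hLmat : (ℓ : Matrix (Fin n) (Fin n) ℚ_[p]) = L := by
    rw [hℓ, Units.val_mul, Matrix.coe_units_inv, huMat, hAUL, ← Matrix.mul_assoc,
      Matrix.nonsing_inv_mul U (Ne.isUnit hUdet), Matrix.one_mul]
  set M' : Matrix (Fin n) (Fin n) ℚ_[p] :=
    ((a⁻¹ : GL (Fin n) ℚ_[p]) : Matrix (Fin n) (Fin n) ℚ_[p]) * U with hM'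
  have hLinvmat : ((ℓ⁻¹ : GL (Fin n) ℚ_[p]) : Matrix (Fin n) (Fin n) ℚ_[p]) = M' := by
    rw [hℓ, _root_.mul_inv_rev, inv_inv, Units.val_mul, huMat, hM']
  have hM'int : ∀ i j, ‖M' i j‖ ≤ 1 := by
    intro i j
    rw [hM', Matrix.mul_apply]
    refine norm_sum_le_one _ _ fun k _ => ?_
    rw [norm_mul]
    exact mul_norm_le_one' (ha.2.1 i k) (hUnorm k j) (norm_nonneg _)
  have hML : M' * L = 1 := by
    rw [← hLinvmat, ← hLmat, ← Units.val_mul, inv_mul_cancel, Units.val_one]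
  have hM'up : ∀ i j : Fin n, i < j → M' i j = 0 := by
    have : Invertible L := _root_.invertibleOfLeftInverse _ _ hML
    have hLinv_eq : L⁻¹ = M' := Matrix.inv_eq_left_inv hML
    have hbt : L.BlockTriangular (OrderDual.toDual ∘ id) := fun i j hij => hLup i j hij
    have hout := Matrix.blockTriangular_inv_of_blockTriangular hbt
    rw [hLinv_eq] at hout
    exact fun i j hij => hout hij
  set jc : GL (Fin n) ℚ_[p] := d⁻¹ * ℓ * d with hjc
  have hjcmat : (jc : Matrix (Fin n) (Fin n) ℚ_[p])
      = Matrix.diagonal w * L * Matrix.diagonal v := by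
    rw [hjc, Units.val_mul, Units.val_mul, hdinvmat, hLmat, hdmat]
  have hjcentry : ∀ i j, (jc : Matrix (Fin n) (Fin n) ℚ_[p]) i j = w i * L i j * v j := by
    intro i j
    rw [hjcmat, Matrix.mul_diagonal, Matrix.diagonal_mul]
  have hjcinv : jc⁻¹ = d⁻¹ * ℓ⁻¹ * d := by rw [hjc]; group
  have hjcinventry : ∀ i j,
      ((jc⁻¹ : GL (Fin n) ℚ_[p]) : Matrix (Fin n) (Fin n) ℚ_[p]) i j = w i * M' i j * v j := by
    intro i j
    rw [hjcinv, Units.val_mul, Units.val_mul, hdinvmat, hLinvmat, hdmat,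
      Matrix.mul_diagonal, Matrix.diagonal_mul]
  have hjcJ : jc ∈ Jset p n := by
    refine ⟨?_, ?_, ?_⟩
    · intro i j
      show ‖(jc : Matrix (Fin n) (Fin n) ℚ_[p]) i j‖ ≤ 1
      rw [hjcentry]
      rcases lt_or_ge i j with h | h
      · rw [hLup i j h, mul_zero, zero_mul, norm_zero]; exact zero_le_one
      · rw [show w i * L i j * v j = L i j * (w i * v j) by ring, norm_mul]
        exact mul_norm_le_one' (hLnorm i j) (hkey i j h) (norm_nonneg _)
    · intro i j
      show ‖((jc⁻¹ : GL (Fin n) ℚ_[p]) : Matrix (Fin n) (Fin n) ℚ_[p]) i j‖ ≤ 1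
      rw [hjcinventry]
      rcases lt_or_ge i j with h | h
      · rw [hM'up i j h, mul_zero, zero_mul, norm_zero]; exact zero_le_one
      · rw [show w i * M' i j * v j = M' i j * (w i * v j) by ring, norm_mul]
        exact mul_norm_le_one' (hM'int i j) (hkey i j h) (norm_nonneg _)
    · intro i j hij
      show ‖(jc : Matrix (Fin n) (Fin n) ℚ_[p]) i j‖ < 1
      rw [hjcentry, show w i * L i j * v j = L i j * (w i * v j) by ring, norm_mul]
      exact mul_norm_lt_one' (hLsub i j hij) (hkey i j hij.le) (norm_nonneg _) (norm_nonneg _)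
  refine ⟨uGL, ⟨?_, ?_⟩, ?_, jc * b, Jset_mul p n hjcJ hb, ?_⟩
  · intro i
    show (uGL : Matrix (Fin n) (Fin n) ℚ_[p]) i i = 1
    rw [huMat]; exact hUdiag i
  · intro i j hij
    show (uGL : Matrix (Fin n) (Fin n) ℚ_[p]) i j = 0
    rw [huMat]; exact hUlow i j hij
  · intro i j
    show ‖(uGL : Matrix (Fin n) (Fin n) ℚ_[p]) i j‖ ≤ 1
    rw [huMat]; exact hUnorm i j
  · rw [hxab, hjc, hℓ]; group
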